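/- arXiv:1808.05274 — 6 statements merged into one kernel-verified Lean document; each statement's English description precedes it below -/
import Mathlib

section
/- Let f : ℝ^n → ℝ be convex, differentiable, and L-smooth, let Ω ⊆ ℝ^n be a nonempty compact convex set of diameter at most D, let x* ∈ Ω minimize f over Ω, and fix δ > 0. Suppose x ∈ Ω, γ ∈ (0, 1], and v ∈ Ω satisfies ⟨∇f(x), v⟩ ≤ min_{u ∈ Ω} ⟨∇f(x), u⟩ + (L D²/2) γ δ. Then the point x⁺ = (1 − γ) x + γ v lies in Ω and satisfies f(x⁺) − f(x*) ≤ (1 − γ)(f(x) − f(x*)) + (L D²/2) γ² (1 + δ). -/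
open scoped InnerProductSpace

section Helpers

variable {n : ℕ}

private lemma myLineDeriv (f : EuclideanSpace ℝ (Fin n) → ℝ)
    (hdiff : Differentiable ℝ f) (x d : EuclideanSpace ℝ (Fin n)) (t : ℝ) :
    HasDerivAt (fun s : ℝ => f (x + s • d)) (⟪gradient f (x + t • d), d⟫_ℝ) t := by
  have hF : HasFDerivAt f ((InnerProductSpace.toDual ℝ _) (gradient f (x + t • d)))
      (x + t • d) :=
    hasGradientAt_iff_hasFDerivAt.mp (hdiff _).hasGradientAt
  have hline : HasDerivAt (fun s : ℝ => x + s • d) d t := by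
    simpa using ((hasDerivAt_id t).smul_const d).const_add x
  exact hF.comp_hasDerivAt t hline

/-- Gradient inequality for convex differentiable functions. -/
private lemma grad_ineq (f : EuclideanSpace ℝ (Fin n) → ℝ)
    (hconv : ConvexOn ℝ Set.univ f) (hdiff : Differentiable ℝ f)
    (x y : EuclideanSpace ℝ (Fin n)) :
    f x + ⟪gradient f x, y - x⟫_ℝ ≤ f y := by
  set d := y - x with hd
  set g : ℝ → ℝ := fun s => f (x + s • d) with hg
  have hgconv : ConvexOn ℝ Set.univ g := by
    have h := hconv.comp_affineMap (AffineMap.lineMap x y)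
    have hpre : (AffineMap.lineMap x y : ℝ →ᵃ[ℝ] _) ⁻¹' Set.univ = Set.univ := by simp
    rw [hpre] at h
    have hfun : g = f ∘ AffineMap.lineMap x y := by
      funext s
      simp [hg, AffineMap.lineMap_apply, hd]
      congr 1
      module
    rw [hfun]; exact h
  have hder : HasDerivAt g (⟪gradient f (x + (0:ℝ) • d), d⟫_ℝ) 0 := myLineDeriv f hdiff x d 0
  have hslope := hgconv.le_slope_of_hasDerivAt (Set.mem_univ (0:ℝ)) (Set.mem_univ (1:ℝ))
    one_pos hder
  have h0 : g 0 = f x := by simp [hg]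
  have h1 : g 1 = f y := by simp [hg, hd]
  have hsl : slope g 0 1 = f y - f x := by
    simp [slope, h0, h1]
  rw [hsl] at hslope
  simp only [zero_smul, add_zero] at hslope
  linarith

/-- Descent lemma for L-smooth functions. -/
private lemma descent_lemma (f : EuclideanSpace ℝ (Fin n) → ℝ) (L : ℝ)
    (hdiff : Differentiable ℝ f)
    (hsmooth : ∀ x y, ‖gradient f x - gradient f y‖ ≤ L * ‖x - y‖)
    (x y : EuclideanSpace ℝ (Fin n)) :
    f y ≤ f x + ⟪gradient f x, y - x⟫_ℝ + L / 2 * ‖y - x‖ ^ 2 := by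
  set d := y - x with hd
  set c : ℝ := ⟪gradient f x, d⟫_ℝ with hc
  set h : ℝ → ℝ := fun s => f (x + s • d) - s * c - L * ‖d‖ ^ 2 * s ^ 2 / 2 with hh
  set h' : ℝ → ℝ := fun s => ⟪gradient f (x + s • d), d⟫_ℝ - c - L * ‖d‖ ^ 2 * s with hh'
  have hder : ∀ t : ℝ, HasDerivAt h (h' t) t := by
    intro t
    have h1 := myLineDeriv f hdiff x d t
    have h2 : HasDerivAt (fun s : ℝ => s * c) c t := by
      simpa using (hasDerivAt_id t).mul_const c
    have h3 : HasDerivAt (fun s : ℝ => L * ‖d‖ ^ 2 * s ^ 2 / 2) (L * ‖d‖ ^ 2 * t) t := by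
      have := ((hasDerivAt_pow 2 t).const_mul (L * ‖d‖ ^ 2)).div_const 2
      simpa using this.congr_deriv (by ring)
    exact (h1.sub h2).sub h3
  have hnonpos : ∀ t ∈ Set.Ioo (0:ℝ) 1, h' t ≤ 0 := by
    intro t ht
    have hinner : ⟪gradient f (x + t • d) - gradient f x, d⟫_ℝ ≤
        ‖gradient f (x + t • d) - gradient f x‖ * ‖d‖ :=
      real_inner_le_norm _ _
    have hlip : ‖gradient f (x + t • d) - gradient f x‖ ≤ L * (t * ‖d‖) := by
      have := hsmooth (x + t • d) x
      simpa [norm_smul, abs_of_pos ht.1] using this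
    have hmul : ‖gradient f (x + t • d) - gradient f x‖ * ‖d‖ ≤ L * (t * ‖d‖) * ‖d‖ :=
      mul_le_mul_of_nonneg_right hlip (norm_nonneg _)
    have hsub : ⟪gradient f (x + t • d) - gradient f x, d⟫_ℝ =
        ⟪gradient f (x + t • d), d⟫_ℝ - c := by
      rw [inner_sub_left]
    have : ⟪gradient f (x + t • d), d⟫_ℝ - c ≤ L * ‖d‖ ^ 2 * t := by
      rw [← hsub]
      calc ⟪gradient f (x + t • d) - gradient f x, d⟫_ℝ ≤ L * (t * ‖d‖) * ‖d‖ :=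
            le_trans hinner hmul
        _ = L * ‖d‖ ^ 2 * t := by ring
    simp only [hh']
    linarith
  have hanti : AntitoneOn h (Set.Icc (0:ℝ) 1) := by
    exact antitoneOn_of_hasDerivWithinAt_nonpos (convex_Icc 0 1)
      (fun t _ => (hder t).continuousAt.continuousWithinAt)
      (fun t ht => ((hder t).hasDerivWithinAt))
      (fun t ht => hnonpos t (by simpa [interior_Icc] using ht))
  have hle : h 1 ≤ h 0 :=
    hanti (Set.mem_Icc.mpr ⟨le_refl 0, zero_le_one⟩)
      (Set.mem_Icc.mpr ⟨zero_le_one, le_refl 1⟩) zero_le_one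
  have h0 : h 0 = f x := by simp [hh]
  have h1 : h 1 = f y - c - L * ‖d‖ ^ 2 / 2 := by simp [hh, hd]
  rw [h0, h1] at hle
  have : L / 2 * ‖d‖ ^ 2 = L * ‖d‖ ^ 2 / 2 := by ring
  linarith [this]

end Helpers

/-- One-step descent inequality for Frank-Wolfe with an approximate
linear-minimization oracle. -/
theorem frankWolfe_one_step_descent {n : ℕ}
    (f : EuclideanSpace ℝ (Fin n) → ℝ) (L : ℝ)
    (hconv : ConvexOn ℝ Set.univ f) (hdiff : Differentiable ℝ f)
    (hsmooth : ∀ x y, ‖gradient f x - gradient f y‖ ≤ L * ‖x - y‖)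
    (Ω : Set (EuclideanSpace ℝ (Fin n))) (hne : Ω.Nonempty)
    (hcomp : IsCompact Ω) (hΩconv : Convex ℝ Ω)
    (D : ℝ) (hD : ∀ x ∈ Ω, ∀ y ∈ Ω, ‖x - y‖ ≤ D)
    (xstar : EuclideanSpace ℝ (Fin n)) (hxstarΩ : xstar ∈ Ω)
    (hmin : ∀ y ∈ Ω, f xstar ≤ f y)
    (δ : ℝ) (hδ : 0 < δ)
    (x : EuclideanSpace ℝ (Fin n)) (hx : x ∈ Ω)
    (γ : ℝ) (hγ0 : 0 < γ) (hγ1 : γ ≤ 1)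
    (v : EuclideanSpace ℝ (Fin n)) (hv : v ∈ Ω)
    (hvapprox : ∀ u ∈ Ω,
      ⟪gradient f x, v⟫_ℝ ≤ ⟪gradient f x, u⟫_ℝ + (L * D ^ 2 / 2) * γ * δ) :
    (1 - γ) • x + γ • v ∈ Ω ∧
      f ((1 - γ) • x + γ • v) - f xstar ≤
        (1 - γ) * (f x - f xstar) + (L * D ^ 2 / 2) * γ ^ 2 * (1 + δ) := by
  have hmem : (1 - γ) • x + γ • v ∈ Ω :=
    hΩconv hx hv (by linarith) (le_of_lt hγ0) (by ring)
  refine ⟨hmem, ?_⟩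
  set xp := (1 - γ) • x + γ • v with hxp
  -- x⁺ - x = γ • (v - x)
  have hdiffpt : xp - x = γ • (v - x) := by
    simp only [hxp, smul_sub]
    module
  -- L D² ≥ 0, from hvapprox with u = x
  have hLD2 : 0 ≤ L * D ^ 2 := by
    have := hvapprox x hx
    have h0 : ⟪gradient f x, v⟫_ℝ - ⟪gradient f x, x⟫_ℝ = ⟪gradient f x, v - x⟫_ℝ := by
      rw [inner_sub_right]
    have hvv := hvapprox v hv
    nlinarith [hvv, mul_pos hγ0 hδ]
  -- ‖v - x‖² bound: L * ‖v-x‖² ≤ L * D²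
  have hnorm : ‖v - x‖ ≤ D := hD v hv x hx
  have hLnorm : L * ‖v - x‖ ^ 2 ≤ L * D ^ 2 := by
    rcases le_or_gt 0 L with hL | hL
    · have h1 : ‖v - x‖ ^ 2 ≤ D ^ 2 := by
        nlinarith [norm_nonneg (v - x)]
      nlinarith
    · have hD2 : D ^ 2 ≤ 0 := by nlinarith
      have hDz : D = 0 := by nlinarith [sq_nonneg D]
      have : ‖v - x‖ = 0 := le_antisymm (by rw [← hDz]; exact hnorm) (norm_nonneg _)
      rw [this, hDz]
  -- descent lemma
  have hdesc := descent_lemma f L hdiff hsmooth x xp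
  rw [hdiffpt] at hdesc
  have hinner_smul : ⟪gradient f x, γ • (v - x)⟫_ℝ = γ * ⟪gradient f x, v - x⟫_ℝ := by
    rw [real_inner_smul_right]
  have hnorm_smul : ‖γ • (v - x)‖ ^ 2 = γ ^ 2 * ‖v - x‖ ^ 2 := by
    rw [norm_smul]
    simp [abs_of_pos hγ0]
    ring
  rw [hinner_smul, hnorm_smul] at hdesc
  -- convexity: ⟪∇f x, xstar - x⟫ ≤ f xstar - f x
  have hconvineq := grad_ineq f hconv hdiff x xstar
  -- hvapprox at xstar
  have happrox := hvapprox xstar hxstarΩ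
  have hsplit : ⟪gradient f x, v - x⟫_ℝ = ⟪gradient f x, v⟫_ℝ - ⟪gradient f x, x⟫_ℝ := by
    rw [inner_sub_right]
  have hsplit2 : ⟪gradient f x, xstar - x⟫_ℝ =
      ⟪gradient f x, xstar⟫_ℝ - ⟪gradient f x, x⟫_ℝ := by
    rw [inner_sub_right]
  -- combine
  have key : ⟪gradient f x, v - x⟫_ℝ ≤ (f xstar - f x) + (L * D ^ 2 / 2) * γ * δ := by
    rw [hsplit]
    have : ⟪gradient f x, xstar⟫_ℝ - ⟪gradient f x, x⟫_ℝ ≤ f xstar - f x := by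
      rw [← hsplit2]; linarith
    linarith
  have hLh : L / 2 * (γ ^ 2 * ‖v - x‖ ^ 2) ≤ L * D ^ 2 / 2 * γ ^ 2 := by
    nlinarith [sq_nonneg γ]
  nlinarith [hdesc, key, hγ0, mul_le_mul_of_nonneg_left key (le_of_lt hγ0)]
end

section
/- Let f : ℝ^n → ℝ be convex, differentiable, and L-smooth, let Ω ⊆ ℝ^n be a nonempty compact convex set of diameter at most D, let x* ∈ Ω minimize f over Ω, and fix δ > 0. Let x_{-1} ∈ Ω and define, for k = 0, 1, 2, …, γ_k = 2/(k+2), ε_k = (L D²/2) γ_k δ, a point v_k ∈ Ω satisfying ⟨∇f(x_{k−1}), v_k⟩ ≤ min_{v ∈ Ω} ⟨∇f(x_{k−1}), v⟩ + ε_k, and x_k = (1 − γ_k) x_{k−1} + γ_k v_k. Then for every k ≥ 0, f(x_k) − f(x*) ≤ 2 L D² (1 + δ)/(k + 2). -/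
open scoped InnerProductSpace

private lemma fw_grad_inner_eq {n : ℕ} (f : EuclideanSpace ℝ (Fin n) → ℝ)
    (hdiff : Differentiable ℝ f) (z u : EuclideanSpace ℝ (Fin n)) :
    fderiv ℝ f z u = ⟪gradient f z, u⟫_ℝ := by
  have h := (hdiff z).hasGradientAt
  rw [hasGradientAt_iff_hasFDerivAt] at h
  rw [h.fderiv]
  simp

private lemma fw_line_hasDerivAt {n : ℕ} (f : EuclideanSpace ℝ (Fin n) → ℝ)
    (hdiff : Differentiable ℝ f) (x u : EuclideanSpace ℝ (Fin n)) (t : ℝ) :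
    HasDerivAt (fun s : ℝ => f (x + s • u)) ⟪gradient f (x + t • u), u⟫_ℝ t := by
  have hc : HasDerivAt (fun s : ℝ => x + s • u) u t := by
    simpa using ((hasDerivAt_id t).smul_const u).const_add x
  have h2 := ((hdiff (x + t • u)).hasFDerivAt).comp_hasDerivAt t hc
  rw [fw_grad_inner_eq f hdiff] at h2
  exact h2

private lemma fw_grad_lower {n : ℕ} (f : EuclideanSpace ℝ (Fin n) → ℝ)
    (hconv : ConvexOn ℝ Set.univ f) (hdiff : Differentiable ℝ f)
    (x y : EuclideanSpace ℝ (Fin n)) : ⟪gradient f x, y - x⟫_ℝ ≤ f y - f x := by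
  set g : ℝ → ℝ := fun t => f (x + t • (y - x)) with hg
  have hgc : ConvexOn ℝ Set.univ g := by
    have h := hconv.comp_affineMap (AffineMap.lineMap x y : ℝ →ᵃ[ℝ] EuclideanSpace ℝ (Fin n))
    have he : (f ∘ (AffineMap.lineMap x y : ℝ →ᵃ[ℝ] EuclideanSpace ℝ (Fin n))) = g := by
      funext t
      simp [g, AffineMap.lineMap_apply, add_comm]
    rw [he] at h
    simpa using h
  have hd : HasDerivAt g ⟪gradient f x, y - x⟫_ℝ 0 := by
    have := fw_line_hasDerivAt f hdiff x (y - x) 0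
    simpa using this
  have hs := hgc.le_slope_of_hasDerivAt (Set.mem_univ 0) (Set.mem_univ 1) one_pos hd
  rw [slope_def_field] at hs
  have h1 : g 1 = f y := by simp [g]
  have h0 : g 0 = f x := by simp [g]
  rw [h1, h0] at hs
  simpa using hs

private lemma fw_descent {n : ℕ} (f : EuclideanSpace ℝ (Fin n) → ℝ) (L : ℝ)
    (hdiff : Differentiable ℝ f)
    (hsmooth : ∀ x y, ‖gradient f x - gradient f y‖ ≤ L * ‖x - y‖)
    (x y : EuclideanSpace ℝ (Fin n)) :
    f y ≤ f x + ⟪gradient f x, y - x⟫_ℝ + L / 2 * ‖y - x‖ ^ 2 := by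
  set u := y - x with hu
  have hgc : Continuous (gradient f) := by
    have hl : LipschitzWith (Real.toNNReal L) (gradient f) :=
      LipschitzWith.of_dist_le_mul fun a b => by
        rw [dist_eq_norm, dist_eq_norm]
        exact (hsmooth a b).trans
          (mul_le_mul_of_nonneg_right (Real.le_coe_toNNReal L) (norm_nonneg _))
    exact hl.continuous
  have hφ'c : Continuous (fun t : ℝ => ⟪gradient f (x + t • u), u⟫_ℝ) :=
    Continuous.inner (hgc.comp (by continuity)) continuous_const
  have hFTC : ∫ t in (0:ℝ)..1, ⟪gradient f (x + t • u), u⟫_ℝ = f y - f x := by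
    have := intervalIntegral.integral_eq_sub_of_hasDerivAt
      (f := fun s : ℝ => f (x + s • u))
      (f' := fun t : ℝ => ⟪gradient f (x + t • u), u⟫_ℝ)
      (a := 0) (b := 1)
      (fun t _ => fw_line_hasDerivAt f hdiff x u t)
      (hφ'c.intervalIntegrable 0 1)
    simpa [hu] using this
  have hmono : ∫ t in (0:ℝ)..1, ⟪gradient f (x + t • u), u⟫_ℝ ≤
      ∫ t in (0:ℝ)..1, (⟪gradient f x, u⟫_ℝ + (L * ‖u‖ ^ 2) * t) := by
    apply intervalIntegral.integral_mono_on zero_le_one (hφ'c.intervalIntegrable 0 1)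
      ((continuous_const.add (continuous_const.mul continuous_id)).intervalIntegrable 0 1)
    intro t ht
    have h1 : ⟪gradient f (x + t • u), u⟫_ℝ =
        ⟪gradient f x, u⟫_ℝ + ⟪gradient f (x + t • u) - gradient f x, u⟫_ℝ := by
      rw [inner_sub_left]; ring
    rw [h1]
    refine add_le_add le_rfl ?_
    calc ⟪gradient f (x + t • u) - gradient f x, u⟫_ℝ
        ≤ ‖gradient f (x + t • u) - gradient f x‖ * ‖u‖ := real_inner_le_norm _ _
      _ ≤ (L * ‖(x + t • u) - x‖) * ‖u‖ :=
          mul_le_mul_of_nonneg_right (hsmooth _ _) (norm_nonneg _)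
      _ = (L * ‖u‖ ^ 2) * t := by
          simp [norm_smul, abs_of_nonneg ht.1]
          ring
  have hval : ∫ t in (0:ℝ)..1, (⟪gradient f x, u⟫_ℝ + (L * ‖u‖ ^ 2) * t)
      = ⟪gradient f x, u⟫_ℝ + L / 2 * ‖u‖ ^ 2 := by
    have hadd := intervalIntegral.integral_add (μ := MeasureTheory.volume)
      (f := fun _ : ℝ => ⟪gradient f x, u⟫_ℝ) (g := fun t : ℝ => (L * ‖u‖ ^ 2) * t)
      (a := 0) (b := 1) intervalIntegrable_const
      ((continuous_const.mul continuous_id').intervalIntegrable 0 1)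
    rw [hadd]
    simp only [intervalIntegral.integral_const]
    rw [intervalIntegral.integral_const_mul, integral_id]
    norm_num
    ring
  rw [hFTC] at hmono
  rw [hval] at hmono
  linarith

set_option maxHeartbeats 1000000

/-- Convergence of Frank-Wolfe with an approximate linear-minimization oracle:
with `γ_k = 2/(k+2)` and oracle error `ε_k = (L D²/2) γ_k δ`, the iterates satisfy
`f(x_k) − f(x*) ≤ 2 L D² (1+δ)/(k+2)`.  Here the Lean index is shifted: `x 0`
is the initial point `x₋₁` and `x (k+1)` is the paper's `x_k`. -/
theorem frankWolfe_approx_oracle_convergence {n : ℕ}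
    (f : EuclideanSpace ℝ (Fin n) → ℝ) (L : ℝ)
    (hconv : ConvexOn ℝ Set.univ f) (hdiff : Differentiable ℝ f)
    (hsmooth : ∀ x y, ‖gradient f x - gradient f y‖ ≤ L * ‖x - y‖)
    (Ω : Set (EuclideanSpace ℝ (Fin n))) (hne : Ω.Nonempty)
    (hcomp : IsCompact Ω) (hΩconv : Convex ℝ Ω)
    (D : ℝ) (hD : ∀ x ∈ Ω, ∀ y ∈ Ω, ‖x - y‖ ≤ D)
    (xstar : EuclideanSpace ℝ (Fin n)) (hxstarΩ : xstar ∈ Ω)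
    (hmin : ∀ y ∈ Ω, f xstar ≤ f y)
    (δ : ℝ) (hδ : 0 < δ)
    (x v : ℕ → EuclideanSpace ℝ (Fin n))
    (hx0 : x 0 ∈ Ω)
    (hvΩ : ∀ k, v k ∈ Ω)
    (hvapprox : ∀ k : ℕ, ∀ u ∈ Ω,
      ⟪gradient f (x k), v k⟫_ℝ ≤
        ⟪gradient f (x k), u⟫_ℝ + (L * D ^ 2 / 2) * (2 / ((k : ℝ) + 2)) * δ)
    (hupdate : ∀ k : ℕ,
      x (k + 1) = (1 - 2 / ((k : ℝ) + 2)) • x k + (2 / ((k : ℝ) + 2)) • v k) :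
    ∀ k : ℕ, f (x (k + 1)) - f xstar ≤ 2 * L * D ^ 2 * (1 + δ) / ((k : ℝ) + 2) := by
  -- basic positivity facts
  have hC0 : 0 ≤ L * D ^ 2 := by
    have h := hvapprox 0 (v 0) (hvΩ 0)
    have h2 : (0:ℝ) ≤ L * D ^ 2 / 2 * (2 / (((0:ℕ) : ℝ) + 2)) * δ := by linarith
    norm_num at h2
    nlinarith [hδ]
  rcases Nat.eq_zero_or_pos n with hn | hn
  · -- degenerate case: the space is a single point
    intro k
    have hx : x (k + 1) = xstar := by subst hn; exact Subsingleton.elim _ _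
    rw [hx, sub_self]
    apply div_nonneg _ (by positivity)
    nlinarith [hC0, hδ]
  -- now `L ≥ 0`
  have hL : 0 ≤ L := by
    set z : EuclideanSpace ℝ (Fin n) := EuclideanSpace.single (⟨0, hn⟩ : Fin n) (1:ℝ) with hz
    have hz1 : ‖z‖ = 1 := by simp [hz, EuclideanSpace.norm_single]
    have h := hsmooth z 0
    rw [sub_zero, hz1] at h
    nlinarith [norm_nonneg (gradient f z - gradient f 0)]
  have hD0 : 0 ≤ D := le_trans (norm_nonneg _) (hD _ hx0 _ hx0)
  have hγpos : ∀ k : ℕ, 0 < 2 / ((k : ℝ) + 2) := fun k => by positivity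
  have hγle : ∀ k : ℕ, 2 / ((k : ℝ) + 2) ≤ 1 := fun k => by
    rw [div_le_one (by positivity)]
    have : (0:ℝ) ≤ (k : ℝ) := Nat.cast_nonneg k
    linarith
  have hxΩ : ∀ k, x k ∈ Ω := by
    intro k
    induction k with
    | zero => exact hx0
    | succ k ih =>
      rw [hupdate k]
      exact hΩconv ih (hvΩ k) (by linarith [hγpos k, hγle k]) (hγpos k).le (by ring)
  -- the one-step recursion
  have key : ∀ k : ℕ, f (x (k + 1)) - f xstar ≤
      (1 - 2 / ((k : ℝ) + 2)) * (f (x k) - f xstar) +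
        (L * D ^ 2 / 2) * (2 / ((k : ℝ) + 2)) ^ 2 * (1 + δ) := by
    intro k
    set γ : ℝ := 2 / ((k : ℝ) + 2) with hγdef
    have hdes := fw_descent f L hdiff hsmooth (x k) (x (k + 1))
    have hxx : x (k + 1) - x k = γ • (v k - x k) := by
      rw [hupdate k, ← hγdef]
      module
    rw [hxx] at hdes
    have hnorm : ‖γ • (v k - x k)‖ ≤ γ * D := by
      rw [norm_smul, Real.norm_eq_abs, abs_of_pos (hγpos k)]
      exact mul_le_mul_of_nonneg_left (hD _ (hvΩ k) _ (hxΩ k)) (hγpos k).le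
    have hsq : L / 2 * ‖γ • (v k - x k)‖ ^ 2 ≤ L * D ^ 2 / 2 * γ ^ 2 := by
      have h2 : ‖γ • (v k - x k)‖ ^ 2 ≤ (γ * D) ^ 2 :=
        pow_le_pow_left₀ (norm_nonneg _) hnorm 2
      nlinarith [hL]
    have hinner : ⟪gradient f (x k), γ • (v k - x k)⟫_ℝ =
        γ * (⟪gradient f (x k), v k⟫_ℝ - ⟪gradient f (x k), x k⟫_ℝ) := by
      rw [inner_smul_right, inner_sub_right]
    have horacle := hvapprox k xstar hxstarΩ
    have hconvlb : ⟪gradient f (x k), xstar⟫_ℝ - ⟪gradient f (x k), x k⟫_ℝ ≤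
        f xstar - f (x k) := by
      have := fw_grad_lower f hconv hdiff (x k) xstar
      rwa [inner_sub_right] at this
    have hmul := mul_le_mul_of_nonneg_left
      (show ⟪gradient f (x k), v k⟫_ℝ - ⟪gradient f (x k), x k⟫_ℝ ≤
          (f xstar - f (x k)) + (L * D ^ 2 / 2) * γ * δ by linarith)
      (hγpos k).le
    rw [hinner] at hdes
    nlinarith [hdes, hmul, hsq]
  -- induction
  intro k
  induction k with
  | zero =>
    have h := key 0
    norm_num at h ⊢
    nlinarith [hC0, hδ]
  | succ k ih =>
    have h := key (k + 1)
    have hc : ((k + 1 : ℕ) : ℝ) = (k : ℝ) + 1 := by push_cast; ring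
    rw [hc] at h ⊢
    have hK : (0:ℝ) ≤ (k : ℝ) := Nat.cast_nonneg k
    have h1γ : 0 ≤ 1 - 2 / (((k : ℝ) + 1) + 2) := by
      have := hγle (k + 1)
      rw [hc] at this
      linarith
    have hmul := mul_le_mul_of_nonneg_left ih h1γ
    have hE : 0 ≤ L * D ^ 2 * (1 + δ) := by nlinarith [hC0, hδ]
    have e0 : ((k : ℝ) + 1) + 2 = (k : ℝ) + 3 := by ring
    rw [e0] at h hmul ⊢
    have hb : (1 - 2 / ((k : ℝ) + 3)) * (2 / ((k : ℝ) + 2)) +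
        (1 / 2) * (2 / ((k : ℝ) + 3)) ^ 2 ≤ 2 / ((k : ℝ) + 3) := by
      have h2 : (0:ℝ) < (k : ℝ) + 2 := by positivity
      have h3 : (0:ℝ) < (k : ℝ) + 3 := by positivity
      have hexp : (1 - 2 / ((k : ℝ) + 3)) * (2 / ((k : ℝ) + 2)) +
          (1 / 2) * (2 / ((k : ℝ) + 3)) ^ 2 =
          (2 * ((k:ℝ) + 1) * ((k:ℝ) + 3) + 2 * ((k:ℝ) + 2)) /
            (((k:ℝ) + 3) ^ 2 * ((k:ℝ) + 2)) := by
        field_simp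
        ring
      rw [hexp, div_le_div_iff₀ (by positivity) h3]
      ring_nf
      nlinarith [hK, mul_nonneg hK hK, mul_nonneg (mul_nonneg hK hK) hK]
    have hbE := mul_le_mul_of_nonneg_left hb hE
    have e1 : (1 - 2 / ((k : ℝ) + 3)) * (2 * L * D ^ 2 * (1 + δ) / ((k : ℝ) + 2)) =
        (L * D ^ 2 * (1 + δ)) * ((1 - 2 / ((k : ℝ) + 3)) * (2 / ((k : ℝ) + 2))) := by ring
    have e2 : L * D ^ 2 / 2 * (2 / ((k : ℝ) + 3)) ^ 2 * (1 + δ) =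
        (L * D ^ 2 * (1 + δ)) * ((1 / 2) * (2 / ((k : ℝ) + 3)) ^ 2) := by ring
    have e3 : 2 * L * D ^ 2 * (1 + δ) / ((k : ℝ) + 3) =
        (L * D ^ 2 * (1 + δ)) * (2 / ((k : ℝ) + 3)) := by ring
    rw [e1] at hmul
    rw [e2] at h
    rw [e3]
    rw [mul_add] at hbE
    linarith [h, hmul, hbE]
end

section
/- Let f₁, …, f_n : ℝ^m → ℝ be convex and differentiable with L-Lipschitz gradients, set f = (1/n) Σᵢ fᵢ, let Ω ⊆ ℝ^m be convex, and let x* ∈ Ω minimize f over Ω (so ⟨∇f(x*), x − x*⟩ ≥ 0 for all x ∈ Ω). Then for every x ∈ Ω, (1/n) Σᵢ ‖∇fᵢ(x) − ∇fᵢ(x*)‖² ≤ 2L (f(x) − f(x*)). -/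
open scoped InnerProductSpace

section Aux
variable {E : Type*} [NormedAddCommGroup E] [InnerProductSpace ℝ E] [CompleteSpace E]

private lemma inner_grad_eq' (g : E → ℝ) (p v : E) :
    ⟪gradient g p, v⟫_ℝ = fderiv ℝ g p v :=
  InnerProductSpace.toDual_symm_apply

private lemma line_hasDerivAt' (g : E → ℝ) (hg : Differentiable ℝ g) (p d : E) (t : ℝ) :
    HasDerivAt (fun s : ℝ => g (p + s • d)) (⟪gradient g (p + t • d), d⟫_ℝ) t := by
  have h1 : HasDerivAt (fun s : ℝ => p + s • d) d t := by
    simpa using ((hasDerivAt_id t).smul_const d).const_add p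
  have h2 := ((hg (p + t • d)).hasFDerivAt).comp_hasDerivAt t h1
  rw [inner_grad_eq']
  exact h2

private lemma convex_grad_le' (g : E → ℝ) (hc : ConvexOn ℝ Set.univ g)
    (hg : Differentiable ℝ g) (y z : E) :
    ⟪gradient g y, z - y⟫_ℝ ≤ g z - g y := by
  set h : ℝ → ℝ := fun t => g (y + t • (z - y)) with hh
  have hder : HasDerivAt h (⟪gradient g y, z - y⟫_ℝ) 0 := by
    simpa using line_hasDerivAt' g hg y (z - y) 0
  have hconvh : ConvexOn ℝ Set.univ h := by
    have := hc.comp_affineMap (AffineMap.lineMap y z : ℝ →ᵃ[ℝ] E)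
    have he : (g ∘ (AffineMap.lineMap y z : ℝ →ᵃ[ℝ] E)) = h := by
      funext t
      simp [AffineMap.lineMap_apply, hh]
      congr 1
      module
    simpa [he] using this
  have hle := hconvh.le_slope_of_hasDerivAt (Set.mem_univ 0) (Set.mem_univ 1) zero_lt_one hder
  have hs : slope h 0 1 = g z - g y := by
    simp [slope_def_field, hh]
  linarith [hle.trans_eq hs]

private lemma descent_lemma' (g : E → ℝ) (hg : Differentiable ℝ g) {L : ℝ}
    (hlip : ∀ a b, ‖gradient g a - gradient g b‖ ≤ L * ‖a - b‖) (x z : E) :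
    g z ≤ g x + ⟪gradient g x, z - x⟫_ℝ + L / 2 * ‖z - x‖ ^ 2 := by
  set d := z - x with hd
  set ψ : ℝ → ℝ := fun t =>
    g (x + t • d) - t * ⟪gradient g x, d⟫_ℝ - L / 2 * t ^ 2 * ‖d‖ ^ 2 with hψ
  have hψd : ∀ t : ℝ, HasDerivAt ψ
      (⟪gradient g (x + t • d) - gradient g x, d⟫_ℝ - L * t * ‖d‖ ^ 2) t := by
    intro t
    have h1 := line_hasDerivAt' g hg x d t
    have h2 : HasDerivAt (fun t : ℝ => t * ⟪gradient g x, d⟫_ℝ) (⟪gradient g x, d⟫_ℝ) t := by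
      simpa using (hasDerivAt_id t).mul_const _
    have h3 : HasDerivAt (fun t : ℝ => L / 2 * t ^ 2 * ‖d‖ ^ 2) (L * t * ‖d‖ ^ 2) t := by
      have := ((hasDerivAt_pow 2 t).const_mul (L / 2)).mul_const (‖d‖ ^ 2)
      refine this.congr_deriv ?_
      ring
    have := (h1.sub h2).sub h3
    rw [inner_sub_left]
    exact this
  have hanti : AntitoneOn ψ (Set.Icc 0 1) := by
    apply antitoneOn_of_deriv_nonpos (convex_Icc 0 1)
    · exact fun t _ => ((hψd t).differentiableAt).continuousAt.continuousWithinAt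
    · exact fun t _ => ((hψd t).differentiableAt).differentiableWithinAt
    · intro t ht
      rw [interior_Icc] at ht
      rw [(hψd t).deriv]
      have hb : ⟪gradient g (x + t • d) - gradient g x, d⟫_ℝ ≤ L * t * ‖d‖ ^ 2 := by
        calc ⟪gradient g (x + t • d) - gradient g x, d⟫_ℝ
            ≤ ‖gradient g (x + t • d) - gradient g x‖ * ‖d‖ := real_inner_le_norm _ _
          _ ≤ (L * ‖(x + t • d) - x‖) * ‖d‖ := by
              have := hlip (x + t • d) x
              nlinarith [norm_nonneg (d : E)]
          _ = L * t * ‖d‖ ^ 2 := by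
              rw [add_sub_cancel_left, norm_smul, Real.norm_eq_abs, abs_of_pos ht.1]
              ring
      linarith
  have h01 := hanti (Set.left_mem_Icc.mpr zero_le_one) (Set.right_mem_Icc.mpr zero_le_one)
      zero_le_one
  have hψ1 : ψ 1 = g z - ⟪gradient g x, d⟫_ℝ - L / 2 * ‖d‖ ^ 2 := by
    simp [hψ, hd]
  have hψ0 : ψ 0 = g x := by simp [hψ]
  rw [hψ1, hψ0] at h01
  linarith

private lemma cocoercive' (g : E → ℝ) (hc : ConvexOn ℝ Set.univ g) (hg : Differentiable ℝ g)
    {L : ℝ} (hL : 0 ≤ L) (hlip : ∀ a b, ‖gradient g a - gradient g b‖ ≤ L * ‖a - b‖)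
    (x y : E) :
    ‖gradient g x - gradient g y‖ ^ 2 ≤
      2 * L * (g x - g y - ⟪gradient g y, x - y⟫_ℝ) := by
  rcases hL.eq_or_lt with hL0 | hLpos
  · have h0 : ‖gradient g x - gradient g y‖ ≤ 0 := by
      simpa [← hL0] using hlip x y
    have : ‖gradient g x - gradient g y‖ = 0 := le_antisymm h0 (norm_nonneg _)
    simp [this, ← hL0]
  · set u := gradient g x - gradient g y with hu
    set z := x - L⁻¹ • u with hz
    have h1 := descent_lemma' g hg hlip x z
    have h2 := convex_grad_le' g hc hg y z
    have hzx : z - x = -(L⁻¹ • u) := by rw [hz]; abel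
    have hnzx : ‖z - x‖ ^ 2 = L⁻¹ ^ 2 * ‖u‖ ^ 2 := by
      rw [hzx, norm_neg, norm_smul, Real.norm_eq_abs, abs_of_pos (inv_pos.mpr hLpos)]
      ring
    have hix : ⟪gradient g x, z - x⟫_ℝ = -(L⁻¹ * ⟪gradient g x, u⟫_ℝ) := by
      rw [hzx, inner_neg_right, real_inner_smul_right]
    have hzy : z - y = (x - y) - L⁻¹ • u := by rw [hz]; abel
    have hiy : ⟪gradient g y, z - y⟫_ℝ
        = ⟪gradient g y, x - y⟫_ℝ - L⁻¹ * ⟪gradient g y, u⟫_ℝ := by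
      rw [hzy, inner_sub_right, real_inner_smul_right]
    have hBA : ⟪gradient g x, u⟫_ℝ - ⟪gradient g y, u⟫_ℝ = ‖u‖ ^ 2 := by
      rw [← inner_sub_left, ← hu, real_inner_self_eq_norm_sq]
    have hLinv : L * L⁻¹ = 1 := mul_inv_cancel₀ hLpos.ne'
    rw [hix, hnzx] at h1
    rw [hiy] at h2
    have h3 : L⁻¹ * ⟪gradient g x, u⟫_ℝ - L⁻¹ * ⟪gradient g y, u⟫_ℝ = L⁻¹ * ‖u‖ ^ 2 := by
      rw [← mul_sub, hBA]
    have h4 : L / 2 * (L⁻¹ ^ 2 * ‖u‖ ^ 2) = L⁻¹ * ‖u‖ ^ 2 / 2 := by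
      field_simp
    have hcomb : L⁻¹ * ‖u‖ ^ 2 / 2 ≤ g x - g y - ⟪gradient g y, x - y⟫_ℝ := by
      linarith
    have hfin := mul_le_mul_of_nonneg_left hcomb (by linarith : (0:ℝ) ≤ 2 * L)
    have h5 : 2 * L * (L⁻¹ * ‖u‖ ^ 2 / 2) = ‖u‖ ^ 2 := by
      field_simp
    linarith [hfin, h5.symm.trans_le hfin]

end Aux

/-- Mean squared gradient deviation at the optimum: if `F = (1/n) Σᵢ fᵢ` with each
`fᵢ` convex with `L`-Lipschitz gradient, and `x*` minimizes `F` over a convex set `Ω`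
(so the first-order optimality condition holds), then for every `x ∈ Ω`,
`(1/n) Σᵢ ‖∇fᵢ(x) − ∇fᵢ(x*)‖² ≤ 2L (F x − F x*)`. -/
theorem mean_sq_gradient_deviation {m n : ℕ}
    (f : Fin n → EuclideanSpace ℝ (Fin m) → ℝ) (L : ℝ)
    (hconv : ∀ i, ConvexOn ℝ Set.univ (f i))
    (hdiff : ∀ i, Differentiable ℝ (f i))
    (hlip : ∀ i x y, ‖gradient (f i) x - gradient (f i) y‖ ≤ L * ‖x - y‖)
    (F : EuclideanSpace ℝ (Fin m) → ℝ)
    (hF : F = fun x => (1 / (n : ℝ)) * ∑ i, f i x)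
    (Ω : Set (EuclideanSpace ℝ (Fin m))) (hΩconv : Convex ℝ Ω)
    (xstar : EuclideanSpace ℝ (Fin m)) (hxstarΩ : xstar ∈ Ω)
    (hmin : ∀ x ∈ Ω, F xstar ≤ F x)
    (hfoc : ∀ x ∈ Ω, 0 ≤ ⟪gradient F xstar, x - xstar⟫_ℝ) :
    ∀ x ∈ Ω,
      (1 / (n : ℝ)) * ∑ i, ‖gradient (f i) x - gradient (f i) xstar‖ ^ 2 ≤
        2 * L * (F x - F xstar) := by
  intro x hx
  rcases subsingleton_or_nontrivial (EuclideanSpace ℝ (Fin m)) with hs | hs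
  · have hxx : x = xstar := Subsingleton.elim _ _
    subst hxx
    simp
  rcases Nat.eq_zero_or_pos n with hn | hn
  · subst hn
    subst hF
    simp
  -- L is nonnegative
  have hL0 : 0 ≤ L := by
    obtain ⟨u, hu⟩ := exists_ne (0 : EuclideanSpace ℝ (Fin m))
    have h1 : (0:ℝ) ≤ L * ‖u - 0‖ := le_trans (norm_nonneg _) (hlip ⟨0, hn⟩ u 0)
    have h2 : 0 < ‖u - 0‖ := by simpa [sub_zero] using norm_pos_iff.mpr hu
    nlinarith
  -- cocoercivity for each i
  have key : ∀ i, ‖gradient (f i) x - gradient (f i) xstar‖ ^ 2 ≤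
      2 * L * (f i x - f i xstar - ⟪gradient (f i) xstar, x - xstar⟫_ℝ) :=
    fun i => cocoercive' (f i) (hconv i) (hdiff i) hL0 (hlip i) x xstar
  have hsum : ∑ i, ‖gradient (f i) x - gradient (f i) xstar‖ ^ 2 ≤
      2 * L * (∑ i, f i x - ∑ i, f i xstar - ∑ i, ⟪gradient (f i) xstar, x - xstar⟫_ℝ) := by
    calc ∑ i, ‖gradient (f i) x - gradient (f i) xstar‖ ^ 2
        ≤ ∑ i, 2 * L * (f i x - f i xstar - ⟪gradient (f i) xstar, x - xstar⟫_ℝ) :=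
          Finset.sum_le_sum fun i _ => key i
      _ = 2 * L * (∑ i, f i x - ∑ i, f i xstar - ∑ i, ⟪gradient (f i) xstar, x - xstar⟫_ℝ) := by
          rw [← Finset.mul_sum, Finset.sum_sub_distrib, Finset.sum_sub_distrib]
  have hninv : (0:ℝ) ≤ 1 / (n : ℝ) := by positivity
  -- gradient of F
  have hgradF : ⟪gradient F xstar, x - xstar⟫_ℝ
      = (1 / (n : ℝ)) * ∑ i, ⟪gradient (f i) xstar, x - xstar⟫_ℝ := by
    rw [inner_grad_eq']
    subst hF
    have hds : DifferentiableAt ℝ (fun y => ∑ i, f i y) xstar :=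
      DifferentiableAt.fun_sum fun i _ => (hdiff i).differentiableAt
    rw [fderiv_const_mul hds]
    have hfs : fderiv ℝ (fun y => ∑ i, f i y) xstar
        = ∑ i, fderiv ℝ (f i) xstar :=
      fderiv_fun_sum fun i _ => (hdiff i).differentiableAt
    simp only [ContinuousLinearMap.smul_apply, hfs, ContinuousLinearMap.sum_apply,
      smul_eq_mul]
    congr 1
    exact Finset.sum_congr rfl fun i _ => (inner_grad_eq' (f i) xstar (x - xstar)).symm
  have hfoc' : 0 ≤ (1 / (n : ℝ)) * ∑ i, ⟪gradient (f i) xstar, x - xstar⟫_ℝ := by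
    rw [← hgradF]; exact hfoc x hx
  have hFx : F x = (1 / (n : ℝ)) * ∑ i, f i x := by rw [hF]
  have hFxs : F xstar = (1 / (n : ℝ)) * ∑ i, f i xstar := by rw [hF]
  have := mul_le_mul_of_nonneg_left hsum hninv
  calc (1 / (n : ℝ)) * ∑ i, ‖gradient (f i) x - gradient (f i) xstar‖ ^ 2
      ≤ (1 / (n : ℝ)) * (2 * L * (∑ i, f i x - ∑ i, f i xstar
          - ∑ i, ⟪gradient (f i) xstar, x - xstar⟫_ℝ)) := this
    _ = 2 * L * (F x - F xstar
          - (1 / (n : ℝ)) * ∑ i, ⟪gradient (f i) xstar, x - xstar⟫_ℝ) := by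
        rw [hFx, hFxs]; ring
    _ ≤ 2 * L * (F x - F xstar) := by nlinarith [hfoc']
end

section
/- Let f : ℝ^n → ℝ be convex, differentiable, and L-smooth, let Ω ⊆ ℝ^n be a nonempty compact convex set of diameter at most D, let x* ∈ Ω minimize f over Ω, and fix δ > 0. Let w₀ ∈ Ω and for s = 1, …, k define γ_s = 2/(s+1), let g_s ∈ ℝ^n satisfy ‖g_s − ∇f(w_{s−1})‖ ≤ L D (1 + δ)/(s + 1), let v_s ∈ Ω satisfy ⟨g_s, v_s⟩ ≤ min_{u ∈ Ω} ⟨g_s, u⟩ + (L D²/2) γ_s δ, and set w_s = (1 − γ_s) w_{s−1} + γ_s v_s. Then f(w_k) − f(x*) ≤ 4 L D² (1 + δ)/(k + 2). -/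
open scoped InnerProductSpace

variable {F : Type*} [NormedAddCommGroup F] [InnerProductSpace ℝ F] [CompleteSpace F]

lemma svrf_aux_hasDerivAt (f : F → ℝ) (hdiff : Differentiable ℝ f) (x d : F) (t : ℝ) :
    HasDerivAt (fun t : ℝ => f (x + t • d)) ⟪gradient f (x + t • d), d⟫_ℝ t := by
  have hc : HasDerivAt (fun t : ℝ => x + t • d) d t := by
    simpa using ((hasDerivAt_id t).smul_const d).const_add x
  have hf : HasFDerivAt f (InnerProductSpace.toDual ℝ F (gradient f (x + t • d))) (x + t • d) :=
    hasGradientAt_iff_hasFDerivAt.mp (hdiff _).hasGradientAt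
  simpa [InnerProductSpace.toDual_apply_apply, Function.comp_def] using hf.comp_hasDerivAt t hc

lemma svrf_convex_grad_le (f : F → ℝ) (hconv : ConvexOn ℝ Set.univ f)
    (hdiff : Differentiable ℝ f) (x y : F) :
    ⟪gradient f x, y - x⟫_ℝ ≤ f y - f x := by
  have hφconv : ConvexOn ℝ Set.univ (fun t : ℝ => f (x + t • (y - x))) := by
    have h := hconv.comp_affineMap (AffineMap.lineMap x y)
    have : (f ∘ (AffineMap.lineMap x y)) = (fun t : ℝ => f (x + t • (y - x))) := by
      funext t
      simp [AffineMap.lineMap_apply, add_comm]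
    rw [this] at h
    simpa using h
  have hd : HasDerivAt (fun t : ℝ => f (x + t • (y - x))) ⟪gradient f x, y - x⟫_ℝ 0 := by
    simpa using svrf_aux_hasDerivAt f hdiff x (y - x) 0
  have h := hφconv.le_slope_of_hasDerivWithinAt_Ioi (Set.mem_univ 0) (Set.mem_univ 1)
    one_pos hd.hasDerivWithinAt
  simpa [slope_def_field] using h

lemma svrf_descent (f : F → ℝ) (hdiff : Differentiable ℝ f) (L : ℝ)
    (hsmooth : ∀ x y, ‖gradient f x - gradient f y‖ ≤ L * ‖x - y‖)
    (x y : F) :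
    f y ≤ f x + ⟪gradient f x, y - x⟫_ℝ + L / 2 * ‖y - x‖ ^ 2 := by
  set d := y - x with hd
  have hcont : Continuous (gradient f) := by
    apply LipschitzWith.continuous (K := L.toNNReal)
    apply LipschitzWith.of_dist_le_mul
    intro a b
    calc dist (gradient f a) (gradient f b) = ‖gradient f a - gradient f b‖ := dist_eq_norm _ _
    _ ≤ L * ‖a - b‖ := hsmooth a b
    _ ≤ L.toNNReal * ‖a - b‖ :=
        mul_le_mul_of_nonneg_right (Real.le_coe_toNNReal L) (norm_nonneg _)
    _ = L.toNNReal * dist a b := by rw [dist_eq_norm]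
  have hcurve : Continuous (fun t : ℝ => x + t • d) := by continuity
  have hcφ : Continuous (fun t : ℝ => ⟪gradient f (x + t • d), d⟫_ℝ) :=
    (hcont.comp hcurve).inner continuous_const
  have hint : f (x + (1:ℝ) • d) - f (x + (0:ℝ) • d)
      = ∫ t in (0:ℝ)..1, ⟪gradient f (x + t • d), d⟫_ℝ :=
    (intervalIntegral.integral_eq_sub_of_hasDerivAt
      (fun t _ => svrf_aux_hasDerivAt f hdiff x d t) (hcφ.intervalIntegrable 0 1)).symm
  have hcψ : Continuous (fun t : ℝ => ⟪gradient f x, d⟫_ℝ + L * ‖d‖ ^ 2 * t) := by continuity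
  have hbound : (∫ t in (0:ℝ)..1, ⟪gradient f (x + t • d), d⟫_ℝ)
      ≤ ∫ t in (0:ℝ)..1, (⟪gradient f x, d⟫_ℝ + L * ‖d‖ ^ 2 * t) := by
    apply intervalIntegral.integral_mono_on zero_le_one (hcφ.intervalIntegrable 0 1)
      (hcψ.intervalIntegrable 0 1)
    intro t ht
    have h1 : ⟪gradient f (x + t • d) - gradient f x, d⟫_ℝ ≤ L * ‖d‖ ^ 2 * t := by
      calc ⟪gradient f (x + t • d) - gradient f x, d⟫_ℝ
          ≤ ‖gradient f (x + t • d) - gradient f x‖ * ‖d‖ := real_inner_le_norm _ _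
        _ ≤ (L * ‖x + t • d - x‖) * ‖d‖ :=
            mul_le_mul_of_nonneg_right (hsmooth _ _) (norm_nonneg _)
        _ = L * ‖d‖ ^ 2 * t := by
            rw [add_sub_cancel_left, norm_smul, Real.norm_eq_abs, abs_of_nonneg ht.1]
            ring
    have h2 : ⟪gradient f (x + t • d), d⟫_ℝ
        = ⟪gradient f x, d⟫_ℝ + ⟪gradient f (x + t • d) - gradient f x, d⟫_ℝ := by
      rw [inner_sub_left]; ring
    linarith
  have hval : (∫ t in (0:ℝ)..1, (⟪gradient f x, d⟫_ℝ + L * ‖d‖ ^ 2 * t))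
      = ⟪gradient f x, d⟫_ℝ + L / 2 * ‖d‖ ^ 2 := by
    rw [intervalIntegral.integral_add (intervalIntegrable_const)
      ((by continuity : Continuous fun t : ℝ => L * ‖d‖ ^ 2 * t).intervalIntegrable 0 1)]
    rw [intervalIntegral.integral_const_mul, integral_id, intervalIntegral.integral_const]
    norm_num
    ring
  simp only [one_smul, zero_smul, add_zero] at hint
  have hy : x + d = y := by rw [hd]; abel
  rw [hy] at hint
  linarith [hint, hbound.trans_eq hval]

set_option maxHeartbeats 1000000 in
/-- Pathwise form of the key lemma (Lemma 2) in the convergence analysis of SVRF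
with approximate oracle: if the inexact gradients `g_s` are accurate to within
`L D (1+δ)/(s+1)`, the iterates with steps `γ_s = 2/(s+1)` satisfy
`f(w_k) − f(x*) ≤ 4 L D² (1+δ)/(k+2)`. -/
theorem svrf_key_lemma {n : ℕ}
    (f : EuclideanSpace ℝ (Fin n) → ℝ) (L : ℝ)
    (hconv : ConvexOn ℝ Set.univ f) (hdiff : Differentiable ℝ f)
    (hsmooth : ∀ x y, ‖gradient f x - gradient f y‖ ≤ L * ‖x - y‖)
    (Ω : Set (EuclideanSpace ℝ (Fin n))) (hne : Ω.Nonempty)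
    (hcomp : IsCompact Ω) (hΩconv : Convex ℝ Ω)
    (D : ℝ) (hD : ∀ x ∈ Ω, ∀ y ∈ Ω, ‖x - y‖ ≤ D)
    (xstar : EuclideanSpace ℝ (Fin n)) (hxstarΩ : xstar ∈ Ω)
    (hmin : ∀ y ∈ Ω, f xstar ≤ f y)
    (δ : ℝ) (hδ : 0 < δ)
    (k : ℕ) (hk : 1 ≤ k)
    (w g v : ℕ → EuclideanSpace ℝ (Fin n))
    (hw0 : w 0 ∈ Ω)
    (hg : ∀ s : ℕ, 1 ≤ s → s ≤ k →
      ‖g s - gradient f (w (s - 1))‖ ≤ L * D * (1 + δ) / ((s : ℝ) + 1))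
    (hvΩ : ∀ s : ℕ, 1 ≤ s → s ≤ k → v s ∈ Ω)
    (hvapprox : ∀ s : ℕ, 1 ≤ s → s ≤ k → ∀ u ∈ Ω,
      ⟪g s, v s⟫_ℝ ≤ ⟪g s, u⟫_ℝ + (L * D ^ 2 / 2) * (2 / ((s : ℝ) + 1)) * δ)
    (hupdate : ∀ s : ℕ, 1 ≤ s → s ≤ k →
      w s = (1 - 2 / ((s : ℝ) + 1)) • w (s - 1) + (2 / ((s : ℝ) + 1)) • v s) :
    f (w k) - f xstar ≤ 4 * L * D ^ 2 * (1 + δ) / ((k : ℝ) + 2) := by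
  -- Basic nonnegativity facts
  obtain ⟨z, hz⟩ := hne
  have hD0 : 0 ≤ D := le_trans (norm_nonneg _) (hD z hz z hz)
  have hLD2 : 0 ≤ L * D ^ 2 := by
    have h := hvapprox 1 le_rfl hk (v 1) (hvΩ 1 le_rfl hk)
    norm_num at h
    nlinarith [h, hδ]
  set C : ℝ := L * D ^ 2 * (1 + δ) with hCdef
  have hC0 : 0 ≤ C := mul_nonneg hLD2 (by linarith)
  -- iterates stay in Ω
  have hwΩ : ∀ s : ℕ, s ≤ k → w s ∈ Ω := by
    intro s
    induction s with
    | zero => intro _; exact hw0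
    | succ m ih =>
      intro hmk
      have h1 : 1 ≤ m + 1 := Nat.succ_le_succ (Nat.zero_le m)
      rw [hupdate (m + 1) h1 hmk]
      have hmm : (m + 1 : ℕ) - 1 = m := rfl
      rw [hmm]
      have hc : (0:ℝ) < ((m + 1 : ℕ) : ℝ) + 1 := by positivity
      have hγle : 2 / (((m + 1 : ℕ) : ℝ) + 1) ≤ 1 := by
        rw [div_le_one hc]; push_cast; linarith
      exact hΩconv (ih (Nat.le_of_succ_le hmk)) (hvΩ (m + 1) h1 hmk)
        (by linarith) (by positivity) (by ring)
  -- the per-step recursion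
  have hstep : ∀ s : ℕ, 1 ≤ s → s ≤ k →
      f (w s) - f xstar ≤ (1 - 2 / ((s : ℝ) + 1)) * (f (w (s - 1)) - f xstar)
        + (2 / ((s : ℝ) + 1)) ^ 2 * C := by
    intro s hs1 hsk
    set x := w (s - 1) with hxdef
    set γ : ℝ := 2 / ((s : ℝ) + 1) with hγdef
    have hs1R : (1:ℝ) ≤ (s : ℝ) := by exact_mod_cast hs1
    have hsp : (0:ℝ) < (s : ℝ) + 1 := by linarith
    have hγpos : 0 < γ := by positivity
    have hγle : γ ≤ 1 := by rw [hγdef, div_le_one hsp]; linarith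
    have hxΩ : x ∈ Ω := hwΩ (s - 1) (le_trans (Nat.sub_le s 1) hsk)
    have hvsΩ : v s ∈ Ω := hvΩ s hs1 hsk
    have hws : w s = x + γ • (v s - x) := by
      rw [hupdate s hs1 hsk, ← hxdef, ← hγdef, smul_sub, sub_smul, one_smul]
      abel
    -- descent lemma
    have hdes := svrf_descent f hdiff L hsmooth x (w s)
    rw [hws] at hdes
    simp only [add_sub_cancel_left] at hdes
    rw [real_inner_smul_right, norm_smul, Real.norm_eq_abs, abs_of_pos hγpos,
      mul_pow] at hdes
    -- inner product decomposition and bounds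
    have hA : ⟪g s, v s⟫_ℝ ≤ ⟪g s, xstar⟫_ℝ + (L * D ^ 2 / 2) * γ * δ :=
      hvapprox s hs1 hsk xstar hxstarΩ
    have hB : ⟪gradient f x, xstar - x⟫_ℝ ≤ f xstar - f x :=
      svrf_convex_grad_le f hconv hdiff x xstar
    have hC1 : ⟪gradient f x - g s, v s - xstar⟫_ℝ ≤ L * D ^ 2 * (1 + δ) / 2 * γ := by
      have hn1 : ‖gradient f x - g s‖ ≤ L * D * (1 + δ) / ((s : ℝ) + 1) := by
        rw [norm_sub_rev]; exact hg s hs1 hsk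
      have hn2 : ‖v s - xstar‖ ≤ D := hD (v s) hvsΩ xstar hxstarΩ
      calc ⟪gradient f x - g s, v s - xstar⟫_ℝ
          ≤ ‖gradient f x - g s‖ * ‖v s - xstar‖ := real_inner_le_norm _ _
        _ ≤ (L * D * (1 + δ) / ((s : ℝ) + 1)) * D := by
            apply mul_le_mul hn1 hn2 (norm_nonneg _)
            exact le_trans (norm_nonneg _) hn1
        _ = L * D ^ 2 * (1 + δ) / 2 * γ := by
            rw [hγdef]; field_simp
    have hid : ⟪gradient f x, v s - x⟫_ℝ
        = (⟪g s, v s⟫_ℝ - ⟪g s, xstar⟫_ℝ) + ⟪gradient f x - g s, v s - xstar⟫_ℝ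
          + ⟪gradient f x, xstar - x⟫_ℝ := by
      simp only [inner_sub_left, inner_sub_right]
      ring
    have hI : ⟪gradient f x, v s - x⟫_ℝ
        ≤ (f xstar - f x) + (L * D ^ 2 / 2) * γ * δ + L * D ^ 2 * (1 + δ) / 2 * γ := by
      rw [hid]; linarith
    have hγI := mul_le_mul_of_nonneg_left hI hγpos.le
    -- curvature bound
    have hcurv : L * ‖v s - x‖ ^ 2 ≤ L * D ^ 2 := by
      by_cases hL : 0 ≤ L
      · have hn : ‖v s - x‖ ≤ D := hD (v s) hvsΩ x hxΩ
        exact mul_le_mul_of_nonneg_left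
          (pow_le_pow_left₀ (norm_nonneg _) hn 2) hL
      · push_neg at hL
        have hvx : v s = x := by
          by_contra hne'
          have h1 := hsmooth (v s) x
          have h2 : 0 < ‖v s - x‖ := by
            rw [norm_pos_iff, sub_ne_zero]; exact hne'
          nlinarith [norm_nonneg (gradient f (v s) - gradient f x)]
        rw [hvx]
        simp
        nlinarith
    have hcurv' := mul_le_mul_of_nonneg_left hcurv (by positivity : (0:ℝ) ≤ γ ^ 2 / 2)
    rw [hCdef, hws]
    linarith [hdes, hγI, hcurv']
  -- induction
  have hind : ∀ s : ℕ, 1 ≤ s → s ≤ k → f (w s) - f xstar ≤ 4 * C / ((s : ℝ) + 2) := by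
    intro s hs1
    induction s, hs1 using Nat.le_induction with
    | base =>
      intro h1k
      have h := hstep 1 le_rfl h1k
      norm_num at h ⊢
      linarith
    | succ m hm ih =>
      intro hmk
      have ih' := ih (Nat.le_of_succ_le hmk)
      have h := hstep (m + 1) (by omega) hmk
      have hmm : (m + 1 : ℕ) - 1 = m := rfl
      rw [hmm] at h
      set t : ℝ := (m : ℝ) with htdef
      have ht1 : (1:ℝ) ≤ t := by rw [htdef]; exact_mod_cast hm
      have hcast : ((m + 1 : ℕ) : ℝ) = t + 1 := by push_cast; ring
      rw [hcast] at h ⊢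
      have ht2 : (0:ℝ) < t + 2 := by linarith
      have ht3 : (0:ℝ) < t + 3 := by linarith
      have hγle : 2 / (t + 1 + 1) ≤ 1 := by rw [div_le_one (by linarith)]; linarith
      have h2 : (1 - 2 / (t + 1 + 1)) * (f (w m) - f xstar)
          ≤ (1 - 2 / (t + 1 + 1)) * (4 * C / (t + 2)) := by
        apply mul_le_mul_of_nonneg_left _ (by linarith)
        convert ih' using 2
      have heq : (1 - 2 / (t + 1 + 1)) * (4 * C / (t + 2)) + (2 / (t + 1 + 1)) ^ 2 * C
          = 4 * C * (t + 1) / (t + 2) ^ 2 := by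
        field_simp
        ring
      have hkey : 4 * C * (t + 1) / (t + 2) ^ 2 ≤ 4 * C / (t + 1 + 2) := by
        rw [div_le_div_iff₀ (by positivity) (by linarith)]
        nlinarith [hC0]
      linarith
  have hfin := hind k hk le_rfl
  have : 4 * C / ((k : ℝ) + 2) = 4 * L * D ^ 2 * (1 + δ) / ((k : ℝ) + 2) := by
    rw [hCdef]; ring
  linarith [hfin.trans_eq this]
end

section
/- Let C ≥ 0 and let (e_s)_{s ≥ 1} be a sequence of nonnegative real numbers satisfying e_1 ≤ C and, for every s ≥ 2, e_s ≤ (1 − 2/(s+1)) e_{s−1} + (2/(s+1))² C. Then for every s ≥ 1, e_s ≤ 4C/(s + 2). -/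
/-- The numerical induction used in the proof of Lemma 2 of the paper, with step
sizes `γ_s = 2/(s+1)`. -/
theorem svrf_rate_induction (C : ℝ) (hC : 0 ≤ C) (e : ℕ → ℝ)
    (he_nonneg : ∀ s, 0 ≤ e s)
    (he1 : e 1 ≤ C)
    (hrec : ∀ s : ℕ, 2 ≤ s →
      e s ≤ (1 - 2 / ((s : ℝ) + 1)) * e (s - 1) + (2 / ((s : ℝ) + 1)) ^ 2 * C) :
    ∀ s : ℕ, 1 ≤ s → e s ≤ 4 * C / ((s : ℝ) + 2) := by
  intro s hs
  induction s, hs using Nat.le_induction with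
  | base =>
    calc e 1 ≤ C := he1
    _ ≤ 4 * C / ((1 : ℕ) + 2 : ℝ) := by push_cast; linarith
  | succ n hn ih =>
    have hrecn := hrec (n + 1) (by omega)
    simp only [Nat.add_sub_cancel] at hrecn
    have hn1 : (1 : ℝ) ≤ (n : ℝ) := by exact_mod_cast hn
    have hpos : (0 : ℝ) < (n : ℝ) + 2 := by linarith
    have hcoef : (0 : ℝ) ≤ 1 - 2 / ((n : ℝ) + 1 + 1) := by
      rw [sub_nonneg, div_le_one (by linarith)]; linarith
    push_cast at hrecn ⊢
    have step : e (n + 1) ≤ (1 - 2 / ((n : ℝ) + 2)) * (4 * C / ((n : ℝ) + 2))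
        + (2 / ((n : ℝ) + 2)) ^ 2 * C := by
      refine hrecn.trans ?_
      have : (1 - 2 / ((n : ℝ) + 1 + 1)) * e n ≤
          (1 - 2 / ((n : ℝ) + 1 + 1)) * (4 * C / ((n : ℝ) + 2)) :=
        mul_le_mul_of_nonneg_left ih hcoef
      have h2 : ((n : ℝ) + 1 + 1) = (n : ℝ) + 2 := by ring
      rw [h2] at this ⊢
      linarith
    refine step.trans ?_
    have key : (1 - 2 / ((n : ℝ) + 2)) * (4 * C / ((n : ℝ) + 2))
        + (2 / ((n : ℝ) + 2)) ^ 2 * C = 4 * C * ((n : ℝ) + 1) / ((n : ℝ) + 2) ^ 2 := by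
      field_simp; ring
    rw [key, div_le_div_iff₀ (by positivity) (by linarith)]
    nlinarith
end

section
/- Let (Ω, 𝓕, ℙ) be a probability space with a filtration (𝓕_s)_{s ≥ 1}, let (X_s)_{s ≥ 1} be a sequence of nonnegative integrable real random variables adapted to (𝓕_s), and let (b_s)_{s ≥ 1} be nonnegative real numbers with Σ_{s=1}^∞ b_s < ∞. Suppose 𝔼[X_s ∣ 𝓕_{s−1}] ≤ X_{s−1} + b_s almost surely for every s ≥ 2, and 𝔼[X_s] → 0 as s → ∞. Then X_s → 0 almost surely. -/
open MeasureTheory Filter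

/-- Abstract content of Theorem 3 of the paper: a nonnegative adapted
almost-supermartingale with summable drift whose expectations tend to zero
converges to zero almost surely.  (The index is shifted so that the Lean index
`s` corresponds to the paper's index `s + 1`.) -/
theorem almost_supermartingale_tendsto_zero {Ω : Type*} {m0 : MeasurableSpace Ω}
    {μ : Measure Ω} [IsProbabilityMeasure μ]
    (ℱ : Filtration ℕ m0)
    (X : ℕ → Ω → ℝ)
    (hadapted : Adapted ℱ X)
    (hint : ∀ s, Integrable (X s) μ)
    (hnonneg : ∀ s, ∀ᵐ ω ∂μ, 0 ≤ X s ω)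
    (b : ℕ → ℝ) (hb : ∀ s, 0 ≤ b s) (hsum : Summable b)
    (hcond : ∀ s : ℕ,
      μ[X (s + 1) | ℱ s] ≤ᵐ[μ] fun ω => X s ω + b (s + 1))
    (hmean : Tendsto (fun s => ∫ ω, X s ω ∂μ) atTop (nhds 0)) :
    ∀ᵐ ω ∂μ, Tendsto (fun s => X s ω) atTop (nhds 0) := by
  classical
  have hbs : ∀ s : ℕ, Summable fun t => b (t + s) := fun s => (summable_nat_add_iff s).2 hsum
  set B : ℕ → ℝ := fun s => ∑' t, b (t + (s + 1)) with hBdef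
  have hBnonneg : ∀ s, 0 ≤ B s := fun s => tsum_nonneg fun t => hb _
  have hBrec : ∀ s, B s = b (s + 1) + B (s + 1) := by
    intro s
    have h0 := Summable.tsum_eq_zero_add (hbs (s + 1))
    simp only [zero_add] at h0
    rw [hBdef]
    simp only
    rw [h0]
    congr 1
    apply tsum_congr
    intro t
    congr 1
    omega
  have hBtend : Tendsto B atTop (nhds 0) :=
    (tendsto_sum_nat_add b).comp (tendsto_add_atTop_nat 1)
  set Y : ℕ → Ω → ℝ := fun s ω => X s ω + B s with hYdef
  have hYadp : Adapted ℱ Y := fun s => (hadapted s).add_const (B s)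
  have hYint : ∀ s, Integrable (Y s) μ := fun s => (hint s).add (integrable_const _)
  have hYsuper : Supermartingale Y ℱ μ := by
    refine supermartingale_nat hYadp.stronglyAdapted hYint fun s => ?_
    have h1 : μ[Y (s + 1)|ℱ s] =ᵐ[μ]
        fun ω => (μ[X (s + 1)|ℱ s]) ω + B (s + 1) := by
      have h2 : Y (s + 1) = X (s + 1) + fun _ => B (s + 1) := rfl
      rw [h2]
      refine (condExp_add (hint (s + 1)) (integrable_const (B (s + 1))) (ℱ s)).trans ?_
      rw [condExp_const (ℱ.le s) (B (s + 1)) (μ := μ)]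
      exact Filter.EventuallyEq.rfl
    filter_upwards [h1, hcond s] with ω h1 h2
    rw [h1]
    have := hBrec s
    simp only [hYdef]
    linarith
  have hYnn : ∀ s, ∀ᵐ ω ∂μ, 0 ≤ Y s ω := fun s =>
    (hnonneg s).mono fun ω h => add_nonneg h (hBnonneg s)
  have hIle : ∀ n, ∫ ω, Y n ω ∂μ ≤ ∫ ω, Y 0 ω ∂μ := by
    intro n
    have := hYsuper.setIntegral_le (Nat.zero_le n) (MeasurableSet.univ (α := Ω))
    simpa using this
  have hsnorm : ∀ n, eLpNorm (Y n) 1 μ = ENNReal.ofReal (∫ ω, Y n ω ∂μ) := by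
    intro n
    rw [eLpNorm_one_eq_lintegral_enorm,
      lintegral_congr_ae ((hYnn n).mono fun ω h => Real.enorm_eq_ofReal h),
      ← ofReal_integral_eq_lintegral_ofReal (hYint n) (hYnn n)]
  set R : NNReal := (∫ ω, Y 0 ω ∂μ).toNNReal with hRdef
  have hbdd : ∀ n, eLpNorm ((-Y) n) 1 μ ≤ (R : ENNReal) := by
    intro n
    have : (-Y) n = -(Y n) := rfl
    rw [this, eLpNorm_neg, hsnorm n]
    exact ENNReal.ofReal_le_ofReal (hIle n)
  have hconv := hYsuper.neg.exists_ae_tendsto_of_bdd hbdd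
  -- Fatou to identify the limit
  have hXme : ∀ s, Measurable (fun ω => ENNReal.ofReal (X s ω)) :=
    fun s => ENNReal.measurable_ofReal.comp ((hadapted s).mono (ℱ.le s) le_rfl)
  have hfatou := lintegral_liminf_le (μ := μ) (u := atTop) hXme
  have hlim0 : (∫⁻ ω, liminf (fun s => ENNReal.ofReal (X s ω)) atTop ∂μ) = 0 := by
    refine le_antisymm (hfatou.trans ?_) zero_le
    have heq : ∀ s, ∫⁻ ω, ENNReal.ofReal (X s ω) ∂μ = ENNReal.ofReal (∫ ω, X s ω ∂μ) :=
      fun s => (ofReal_integral_eq_lintegral_ofReal (hint s) (hnonneg s)).symm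
    simp_rw [heq]
    have ht : Tendsto (fun s => ENNReal.ofReal (∫ ω, X s ω ∂μ)) atTop (nhds 0) := by
      simpa using (ENNReal.tendsto_ofReal hmean)
    exact le_of_eq ht.liminf_eq
  have hae0 : ∀ᵐ ω ∂μ, liminf (fun s => ENNReal.ofReal (X s ω)) atTop = 0 := by
    exact (lintegral_eq_zero_iff (Measurable.liminf hXme)).1 hlim0
  have hnnall : ∀ᵐ ω ∂μ, ∀ s, 0 ≤ X s ω := ae_all_iff.2 hnonneg
  filter_upwards [hconv, hae0, hnnall] with ω hc h0 hnn
  obtain ⟨c, hc⟩ := hc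
  have hYt : Tendsto (fun n => Y n ω) atTop (nhds (-c)) := by
    have : (fun n => Y n ω) = fun n => -((-Y) n ω) := by funext n; simp
    rw [this]
    simpa using hc.neg
  have hXt : Tendsto (fun n => X n ω) atTop (nhds (-c - 0)) := by
    have : (fun n => X n ω) = fun n => Y n ω - B n := by
      funext n; simp [hYdef]
    rw [this]
    exact hYt.sub hBtend
  rw [sub_zero] at hXt
  have hge : 0 ≤ -c := ge_of_tendsto' hXt hnn |>.trans_eq rfl
  have hofreal : Tendsto (fun n => ENNReal.ofReal (X n ω)) atTop (nhds (ENNReal.ofReal (-c))) :=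
    (ENNReal.continuous_ofReal.tendsto _).comp hXt
  have h1 : ENNReal.ofReal (-c) = 0 := by rw [← hofreal.liminf_eq]; exact h0
  have hle : -c ≤ 0 := by
    by_contra h
    exact absurd h1 (by simp [ENNReal.ofReal_eq_zero]; linarith)
  have : -c = 0 := le_antisymm hle hge
  rwa [this] at hXt
end
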